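/- If a species has global abundance n distributed according to a zero-truncated negative binomial with parameters r and ξ, i.e. P(n|1) = c(r,ξ)·C(n+r-1, n)·ξ^n·(1-ξ)^r for n ≥ 1, and individuals are sampled independently with probability p, then the sampled abundance k ≥ 1 has probability P(k|p) = c(r,ξ)·C(k+r-1, k)·ξ_p^k·(1-ξ_p)^r, where ξ_p = pξ/(1-ξ(1-p)). -/

import Mathlib

open Real Set MeasureTheory Filter Topology

lemma my_summable (a x : ℝ) (ha : 0 < a) (hx0 : 0 ≤ x) (hx1 : x < 1) :
    Summable (fun m : ℕ => x ^ m / m.factorial * Real.Gamma (m + a)) := by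
  set r : ℝ := (x + 1) / 2 with hr
  have hxr : x < r := by rw [hr]; linarith
  have hr1 : r < 1 := by rw [hr]; linarith
  have htend : Tendsto (fun m : ℕ => x * (1 + (a - 1) / ((m : ℝ) + 1))) atTop (𝓝 x) := by
    have h0 : Tendsto (fun m : ℕ => (a - 1) / ((m : ℝ) + 1)) atTop (𝓝 0) := by
      apply Tendsto.div_atTop tendsto_const_nhds
      exact tendsto_atTop_add_const_right _ _ tendsto_natCast_atTop_atTop
    have := (tendsto_const_nhds (x := x)).mul ((tendsto_const_nhds (x := (1:ℝ))).add h0)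
    simpa using this
  have hev : ∀ᶠ m : ℕ in atTop, x * (1 + (a - 1) / ((m : ℝ) + 1)) ≤ r :=
    htend.eventually_le_const hxr
  refine summable_of_ratio_norm_eventually_le hr1 ?_
  filter_upwards [hev] with m hm
  have hm1 : (0:ℝ) < (m : ℝ) + 1 := by positivity
  have hma : (0:ℝ) < (m : ℝ) + a := by positivity
  have hfac : ((m+1).factorial : ℝ) = ((m:ℝ) + 1) * m.factorial := by
    rw [Nat.factorial_succ]; push_cast; ring
  have hgam : Real.Gamma ((m+1 : ℕ) + a) = ((m:ℝ) + a) * Real.Gamma (m + a) := by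
    push_cast
    rw [show (m:ℝ) + 1 + a = ((m:ℝ) + a) + 1 by ring, Real.Gamma_add_one hma.ne']
  have hterm : x ^ (m+1) / (m+1).factorial * Real.Gamma ((m+1:ℕ) + a)
      = (x * (((m:ℝ) + a) / ((m:ℝ) + 1))) * (x ^ m / m.factorial * Real.Gamma (m + a)) := by
    rw [hgam, hfac, pow_succ]
    field_simp
  have hnn : (0:ℝ) ≤ x ^ m / m.factorial * Real.Gamma (m + a) := by
    have := Real.Gamma_nonneg_of_nonneg hma.le
    positivity
  have hgle : x * (((m:ℝ) + a) / ((m:ℝ) + 1)) ≤ r := by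
    have : x * (((m:ℝ) + a) / ((m:ℝ) + 1)) = x * (1 + (a - 1) / ((m : ℝ) + 1)) := by
      field_simp
      ring
    rw [this]; exact hm
  have hgnn : 0 ≤ x * (((m:ℝ) + a) / ((m:ℝ) + 1)) := by positivity
  rw [hterm]
  rw [norm_mul, Real.norm_eq_abs, Real.norm_eq_abs, abs_of_nonneg hgnn, abs_of_nonneg hnn]
  exact mul_le_mul_of_nonneg_right hgle hnn

lemma my_binom_series (a x : ℝ) (ha : 0 < a) (hx0 : 0 ≤ x) (hx1 : x < 1) :
    ∑' m : ℕ, x ^ m / m.factorial * Real.Gamma (m + a)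
      = (1 - x) ^ (-a : ℝ) * Real.Gamma a := by
  have hc : (0:ℝ) < 1 - x := by linarith
  set F : ℕ → ℝ → ℝ := fun m t => x ^ m / m.factorial * (t ^ ((m : ℝ) + a - 1) * Real.exp (-t))
    with hF
  have hma : ∀ m : ℕ, (0:ℝ) < (m : ℝ) + a := fun m => by positivity
  have hbase : ∀ m : ℕ, IntegrableOn (fun t : ℝ => t ^ ((m:ℝ) + a - 1) * Real.exp (-t))
      (Ioi 0) := by
    intro m
    have := Real.GammaIntegral_convergent (hma m)
    exact this.congr_fun (fun t _ => mul_comm _ _) measurableSet_Ioi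
  have hInt : ∀ m, IntegrableOn (F m) (Ioi 0) := fun m => (hbase m).const_mul _
  have hval : ∀ m : ℕ, ∫ t in Ioi 0, F m t = x ^ m / m.factorial * Real.Gamma (m + a) := by
    intro m
    rw [hF]
    simp only
    rw [MeasureTheory.integral_const_mul]
    congr 1
    have := Real.integral_rpow_mul_exp_neg_mul_Ioi (hma m) one_pos
    simpa using this
  have hnorm : ∀ m : ℕ, ∫ t in Ioi 0, ‖F m t‖ = ∫ t in Ioi 0, F m t := by
    intro m
    refine setIntegral_congr_fun measurableSet_Ioi fun t ht => ?_
    have ht' : (0:ℝ) < t := ht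
    rw [Real.norm_eq_abs, abs_of_nonneg]
    have : (0:ℝ) ≤ t ^ ((m:ℝ) + a - 1) := Real.rpow_nonneg ht'.le _
    positivity
  have hsum : Summable fun m : ℕ => ∫ t in Ioi 0, ‖F m t‖ := by
    have := my_summable a x ha hx0 hx1
    refine this.congr fun m => ?_
    rw [hnorm m, hval m]
  have key : ∑' m, (∫ t in Ioi 0, F m t) = ∫ t in Ioi 0, ∑' m, F m t :=
    MeasureTheory.integral_tsum_of_summable_integral_norm hInt hsum
  have hpt : ∀ t ∈ Ioi (0:ℝ), ∑' m, F m t = t ^ (a - 1) * Real.exp (-((1 - x) * t)) := by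
    intro t ht
    have ht' : (0:ℝ) < t := ht
    have hsplit : ∀ m : ℕ, F m t = (x * t) ^ m / m.factorial * (t ^ (a - 1) * Real.exp (-t)) := by
      intro m
      rw [hF]
      simp only
      rw [show (m : ℝ) + a - 1 = (a - 1) + (m:ℝ) by ring, Real.rpow_add ht',
        Real.rpow_natCast, mul_pow]
      ring
    rw [tsum_congr hsplit, tsum_mul_right]
    have hexp : ∑' m : ℕ, (x * t) ^ m / m.factorial = Real.exp (x * t) := by
      rw [Real.exp_eq_exp_ℝ, NormedSpace.exp_eq_tsum_div]
    rw [hexp, show -((1 - x) * t) = x * t + -t by ring, Real.exp_add]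
    ring
  have hpt' : ∫ t in Ioi 0, ∑' m, F m t
      = ∫ t in Ioi 0, t ^ (a - 1) * Real.exp (-((1 - x) * t)) :=
    setIntegral_congr_fun measurableSet_Ioi hpt
  have hfinal : ∫ t in Ioi 0, t ^ (a - 1) * Real.exp (-((1 - x) * t))
      = (1 - x) ^ (-a : ℝ) * Real.Gamma a := by
    rw [Real.integral_rpow_mul_exp_neg_mul_Ioi ha hc]
    congr 1
    rw [one_div, Real.inv_rpow hc.le, ← Real.rpow_neg hc.le]
  calc ∑' m : ℕ, x ^ m / m.factorial * Real.Gamma (m + a)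
      = ∑' m, ∫ t in Ioi 0, F m t := by rw [tsum_congr fun m => (hval m).symm]
    _ = (1 - x) ^ (-a : ℝ) * Real.Gamma a := by rw [key, hpt', hfinal]

/-- Generalized negative binomial coefficient C(n+r-1, n) = Γ(n+r)/(Γ(n+1)Γ(r)). -/
noncomputable def nbCoef (r : ℝ) (n : ℕ) : ℝ :=
  Real.Gamma (n + r) / (Real.Gamma (n + 1) * Real.Gamma r)

/-- Binomially thinning a zero-truncated negative binomial RSA at rate p gives the
truncated negative binomial with rescaled parameter ξ_p, for every k ≥ 1. -/
theorem stmt0 (r ξ p : ℝ) (hr : 0 < r) (hξ : ξ ∈ Set.Ioo (0:ℝ) 1)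
    (hp : p ∈ Set.Ioo (0:ℝ) 1) (k : ℕ) (hk : 1 ≤ k) :
    ∑' m : ℕ, ((k + m).choose k : ℝ) * p ^ k * (1 - p) ^ m *
        ((1 - (1 - ξ) ^ r)⁻¹ * nbCoef r (k + m) * ξ ^ (k + m) * (1 - ξ) ^ r)
      = (1 - (1 - ξ) ^ r)⁻¹ * nbCoef r k * (p * ξ / (1 - ξ * (1 - p))) ^ k *
        (1 - p * ξ / (1 - ξ * (1 - p))) ^ r := by
  obtain ⟨hξ0, hξ1⟩ := hξ
  obtain ⟨hp0, hp1⟩ := hp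
  set y : ℝ := (1 - p) * ξ with hy
  have hy0 : 0 ≤ y := mul_nonneg (by linarith) hξ0.le
  have hy1 : y < 1 := by nlinarith
  have ha : (0:ℝ) < (k:ℝ) + r := by positivity
  have hd : (0:ℝ) < 1 - ξ * (1 - p) := by nlinarith
  have hΓr : Real.Gamma r ≠ 0 := (Real.Gamma_pos_of_pos hr).ne'
  set A : ℝ := (1 - (1 - ξ) ^ r)⁻¹ with hA
  set C0 : ℝ := A * p ^ k * ξ ^ k * (1 - ξ) ^ r / (k.factorial * Real.Gamma r) with hC0
  have hterm : ∀ m : ℕ, ((k + m).choose k : ℝ) * p ^ k * (1 - p) ^ m *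
      (A * nbCoef r (k + m) * ξ ^ (k + m) * (1 - ξ) ^ r)
      = C0 * (y ^ m / m.factorial * Real.Gamma (m + ((k:ℝ) + r))) := by
    intro m
    have hchoose : (((k + m).choose k : ℕ) : ℝ)
        = (k + m).factorial / (k.factorial * m.factorial) := by
      rw [Nat.cast_choose ℝ (Nat.le_add_right k m), Nat.add_sub_cancel_left]
    have hΓfac : Real.Gamma ((k + m : ℕ) + 1) = (k + m).factorial :=
      Real.Gamma_nat_eq_factorial (k + m)
    have hΓarg : Real.Gamma (((k + m : ℕ) : ℝ) + r) = Real.Gamma ((m:ℝ) + ((k:ℝ) + r)) := by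
      congr 1; push_cast; ring
    rw [nbCoef, hΓfac, hΓarg, hchoose, hC0, hy]
    have hkm : ((k + m).factorial : ℝ) ≠ 0 := Nat.cast_ne_zero.mpr (Nat.factorial_ne_zero _)
    have hkf : (k.factorial : ℝ) ≠ 0 := Nat.cast_ne_zero.mpr (Nat.factorial_ne_zero _)
    have hmf : (m.factorial : ℝ) ≠ 0 := Nat.cast_ne_zero.mpr (Nat.factorial_ne_zero _)
    rw [pow_add, mul_pow]
    field_simp
  rw [tsum_congr hterm, tsum_mul_left, my_binom_series _ _ ha hy0 hy1]
  have h1y : 1 - y = 1 - ξ * (1 - p) := by rw [hy]; ring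
  have h1 : 1 - p * ξ / (1 - ξ * (1 - p)) = (1 - ξ) / (1 - ξ * (1 - p)) := by
    field_simp
    ring
  have h3 : (1 - ξ * (1 - p)) ^ (-((k:ℝ) + r))
      = ((1 - ξ * (1 - p)) ^ k * (1 - ξ * (1 - p)) ^ r)⁻¹ := by
    rw [Real.rpow_neg hd.le, Real.rpow_add hd, Real.rpow_natCast]
  rw [h1y, h1, Real.div_rpow (by linarith) hd.le, h3, nbCoef,
    div_pow, Real.Gamma_nat_eq_factorial, hC0]
  have hkf : (k.factorial : ℝ) ≠ 0 := Nat.cast_ne_zero.mpr (Nat.factorial_ne_zero _)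
  have hdk : (1 - ξ * (1 - p)) ^ k ≠ 0 := pow_ne_zero _ hd.ne'
  have hdr : (1 - ξ * (1 - p)) ^ r ≠ 0 := (Real.rpow_pos_of_pos hd r).ne'
  field_simp
  ring
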